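/- For every integer b > 78557, there exist infinitely many positive integers t such that the b-repdigit 78557·(b^t − 1)/(b − 1) is a Sierpiński number; in particular, for every integer b > 78557 there exist infinitely many b-repdigit Sierpiński numbers. -/
import Mathlib


set_option maxRecDepth 10000
open Finset

/-- The period for `t`: `lcm` of `p*(p-1)` over `p ∈ {2,3,5,7,13,19,37,73}`. -/
def Lc : ℕ := 1681210440

/-- geometric sum identity without subtraction -/
lemma geom_id (b : ℕ) (hb : 1 ≤ b) (t : ℕ) :
    (b - 1) * (∑ i ∈ range t, b ^ i) + 1 = b ^ t := by
  obtain ⟨c, rfl⟩ : ∃ c, b = c + 1 := ⟨b - 1, by omega⟩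
  simp only [Nat.add_sub_cancel]
  induction t with
  | zero => simp
  | succ t ih =>
    rw [Finset.sum_range_succ, pow_succ, ← ih]; ring

lemma geom_div (b : ℕ) (hb : 2 ≤ b) (t : ℕ) :
    (b ^ t - 1) / (b - 1) = ∑ i ∈ range t, b ^ i := by
  have h := geom_id b (by omega) t
  have h1 : b ^ t - 1 = (b - 1) * (∑ i ∈ range t, b ^ i) := by omega
  rw [h1, Nat.mul_div_cancel_left _ (by omega)]

/-- key field lemma: `x * ∑_{i<L} x^i = 0` in `ZMod p` when `p ∣ L` and `p-1 ∣ L`. -/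
lemma key_field (p : ℕ) [Fact p.Prime] (hpL : p ∣ Lc) (hp1L : (p - 1) ∣ Lc) (x : ZMod p) :
    x * ∑ i ∈ range Lc, x ^ i = 0 := by
  rcases eq_or_ne x 0 with rfl | hx0
  · simp
  rcases eq_or_ne x 1 with rfl | hx1
  · simp only [one_pow, Finset.sum_const, card_range, nsmul_eq_mul, mul_one]
    have h0 : ((Lc : ℕ) : ZMod p) = 0 := (ZMod.natCast_eq_zero_iff Lc p).mpr hpL
    simp [h0]
  · have hxL : x ^ Lc = 1 := by
      obtain ⟨c, hc⟩ := hp1L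
      rw [hc, pow_mul, ZMod.pow_card_sub_one_eq_one hx0, one_pow]
    rw [geom_sum_eq hx1, hxL, sub_self, zero_div, mul_zero]

/-- The repunit `∑_{i < Lc*j+1} b^i` is `≡ 1` mod each covering prime. -/
lemma repunit_mod (b p : ℕ) [Fact p.Prime] (hpL : p ∣ Lc) (hp1L : (p - 1) ∣ Lc) (j : ℕ) :
    ((∑ i ∈ range (Lc * j + 1), b ^ i : ℕ) : ZMod p) = 1 := by
  induction j with
  | zero => simp
  | succ j ih =>
    have hsplit : (∑ i ∈ range (Lc * (j + 1) + 1), b ^ i)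
        = (∑ i ∈ range (Lc * j + 1), b ^ i)
          + b ^ (Lc * j) * (b * ∑ i ∈ range Lc, b ^ i) := by
      have : Lc * (j + 1) + 1 = (Lc * j + 1) + Lc := by ring
      rw [this, Finset.sum_range_add, Finset.mul_sum, Finset.mul_sum]
      refine congrArg _ (Finset.sum_congr rfl fun i _ => ?_)
      ring
    rw [hsplit]
    push_cast
    rw [key_field p hpL hp1L ((b : ZMod p))]
    simpa using ih

/-- covering step: transfer divisibility along `n % 36`. -/
lemma cov_prime (p r : ℕ) (hp1 : 1 < p) (h36 : 2 ^ 36 % p = 1)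
    (h : (78557 * 2 ^ r + 1) % p = 0) (n : ℕ) (hn : n % 36 = r) :
    p ∣ 78557 * 2 ^ n + 1 := by
  have h2 : (2 : ℕ) ^ n ≡ 2 ^ r [MOD p] := by
    have hn' : n = 36 * (n / 36) + r := by omega
    calc (2:ℕ) ^ n = (2 ^ 36) ^ (n / 36) * 2 ^ r := by
          rw [← pow_mul, ← pow_add, ← hn']
      _ ≡ 1 ^ (n / 36) * 2 ^ r [MOD p] := by
          refine Nat.ModEq.mul_right _ (Nat.ModEq.pow _ ?_)
          show 2 ^ 36 % p = 1 % p
          rw [h36, Nat.mod_eq_of_lt hp1]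
      _ = 2 ^ r := by rw [one_pow, one_mul]
  have : (78557 * 2 ^ n + 1 : ℕ) ≡ 78557 * 2 ^ r + 1 [MOD p] :=
    Nat.ModEq.add_right 1 (Nat.ModEq.mul_left _ h2)
  have h0 : (78557 * 2 ^ n + 1 : ℕ) ≡ 0 [MOD p] := this.trans (by show _ % p = 0 % p; rw [h, Nat.zero_mod])
  exact (Nat.modEq_zero_iff_dvd).mp h0

/-- The covering system for 78557. -/
lemma covering (n : ℕ) : ∃ p : ℕ, p.Prime ∧ p ∣ Lc ∧ (p - 1) ∣ Lc ∧ p ≤ 73 ∧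
    p ∣ 78557 * 2 ^ n + 1 := by
  have hr : n % 36 < 36 := Nat.mod_lt _ (by norm_num)
  set r := n % 36 with hrdef
  have hn : n % 36 = r := rfl
  interval_cases r <;>
    [ exact ⟨3, by norm_num, by norm_num [Lc], by norm_num [Lc], by norm_num, cov_prime 3 _ (by norm_num) (by norm_num) (by norm_num) n hn⟩;
      exact ⟨5, by norm_num, by norm_num [Lc], by norm_num [Lc], by norm_num, cov_prime 5 _ (by norm_num) (by norm_num) (by norm_num) n hn⟩;
      exact ⟨3, by norm_num, by norm_num [Lc], by norm_num [Lc], by norm_num, cov_prime 3 _ (by norm_num) (by norm_num) (by norm_num) n hn⟩;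
      exact ⟨73, by norm_num, by norm_num [Lc], by norm_num [Lc], by norm_num, cov_prime 73 _ (by norm_num) (by norm_num) (by norm_num) n hn⟩;
      exact ⟨3, by norm_num, by norm_num [Lc], by norm_num [Lc], by norm_num, cov_prime 3 _ (by norm_num) (by norm_num) (by norm_num) n hn⟩;
      exact ⟨5, by norm_num, by norm_num [Lc], by norm_num [Lc], by norm_num, cov_prime 5 _ (by norm_num) (by norm_num) (by norm_num) n hn⟩;
      exact ⟨3, by norm_num, by norm_num [Lc], by norm_num [Lc], by norm_num, cov_prime 3 _ (by norm_num) (by norm_num) (by norm_num) n hn⟩;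
      exact ⟨7, by norm_num, by norm_num [Lc], by norm_num [Lc], by norm_num, cov_prime 7 _ (by norm_num) (by norm_num) (by norm_num) n hn⟩;
      exact ⟨3, by norm_num, by norm_num [Lc], by norm_num [Lc], by norm_num, cov_prime 3 _ (by norm_num) (by norm_num) (by norm_num) n hn⟩;
      exact ⟨5, by norm_num, by norm_num [Lc], by norm_num [Lc], by norm_num, cov_prime 5 _ (by norm_num) (by norm_num) (by norm_num) n hn⟩;
      exact ⟨3, by norm_num, by norm_num [Lc], by norm_num [Lc], by norm_num, cov_prime 3 _ (by norm_num) (by norm_num) (by norm_num) n hn⟩;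
      exact ⟨13, by norm_num, by norm_num [Lc], by norm_num [Lc], by norm_num, cov_prime 13 _ (by norm_num) (by norm_num) (by norm_num) n hn⟩;
      exact ⟨3, by norm_num, by norm_num [Lc], by norm_num [Lc], by norm_num, cov_prime 3 _ (by norm_num) (by norm_num) (by norm_num) n hn⟩;
      exact ⟨5, by norm_num, by norm_num [Lc], by norm_num [Lc], by norm_num, cov_prime 5 _ (by norm_num) (by norm_num) (by norm_num) n hn⟩;
      exact ⟨3, by norm_num, by norm_num [Lc], by norm_num [Lc], by norm_num, cov_prime 3 _ (by norm_num) (by norm_num) (by norm_num) n hn⟩;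
      exact ⟨19, by norm_num, by norm_num [Lc], by norm_num [Lc], by norm_num, cov_prime 19 _ (by norm_num) (by norm_num) (by norm_num) n hn⟩;
      exact ⟨3, by norm_num, by norm_num [Lc], by norm_num [Lc], by norm_num, cov_prime 3 _ (by norm_num) (by norm_num) (by norm_num) n hn⟩;
      exact ⟨5, by norm_num, by norm_num [Lc], by norm_num [Lc], by norm_num, cov_prime 5 _ (by norm_num) (by norm_num) (by norm_num) n hn⟩;
      exact ⟨3, by norm_num, by norm_num [Lc], by norm_num [Lc], by norm_num, cov_prime 3 _ (by norm_num) (by norm_num) (by norm_num) n hn⟩;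
      exact ⟨7, by norm_num, by norm_num [Lc], by norm_num [Lc], by norm_num, cov_prime 7 _ (by norm_num) (by norm_num) (by norm_num) n hn⟩;
      exact ⟨3, by norm_num, by norm_num [Lc], by norm_num [Lc], by norm_num, cov_prime 3 _ (by norm_num) (by norm_num) (by norm_num) n hn⟩;
      exact ⟨5, by norm_num, by norm_num [Lc], by norm_num [Lc], by norm_num, cov_prime 5 _ (by norm_num) (by norm_num) (by norm_num) n hn⟩;
      exact ⟨3, by norm_num, by norm_num [Lc], by norm_num [Lc], by norm_num, cov_prime 3 _ (by norm_num) (by norm_num) (by norm_num) n hn⟩;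
      exact ⟨13, by norm_num, by norm_num [Lc], by norm_num [Lc], by norm_num, cov_prime 13 _ (by norm_num) (by norm_num) (by norm_num) n hn⟩;
      exact ⟨3, by norm_num, by norm_num [Lc], by norm_num [Lc], by norm_num, cov_prime 3 _ (by norm_num) (by norm_num) (by norm_num) n hn⟩;
      exact ⟨5, by norm_num, by norm_num [Lc], by norm_num [Lc], by norm_num, cov_prime 5 _ (by norm_num) (by norm_num) (by norm_num) n hn⟩;
      exact ⟨3, by norm_num, by norm_num [Lc], by norm_num [Lc], by norm_num, cov_prime 3 _ (by norm_num) (by norm_num) (by norm_num) n hn⟩;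
      exact ⟨37, by norm_num, by norm_num [Lc], by norm_num [Lc], by norm_num, cov_prime 37 _ (by norm_num) (by norm_num) (by norm_num) n hn⟩;
      exact ⟨3, by norm_num, by norm_num [Lc], by norm_num [Lc], by norm_num, cov_prime 3 _ (by norm_num) (by norm_num) (by norm_num) n hn⟩;
      exact ⟨5, by norm_num, by norm_num [Lc], by norm_num [Lc], by norm_num, cov_prime 5 _ (by norm_num) (by norm_num) (by norm_num) n hn⟩;
      exact ⟨3, by norm_num, by norm_num [Lc], by norm_num [Lc], by norm_num, cov_prime 3 _ (by norm_num) (by norm_num) (by norm_num) n hn⟩;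
      exact ⟨7, by norm_num, by norm_num [Lc], by norm_num [Lc], by norm_num, cov_prime 7 _ (by norm_num) (by norm_num) (by norm_num) n hn⟩;
      exact ⟨3, by norm_num, by norm_num [Lc], by norm_num [Lc], by norm_num, cov_prime 3 _ (by norm_num) (by norm_num) (by norm_num) n hn⟩;
      exact ⟨5, by norm_num, by norm_num [Lc], by norm_num [Lc], by norm_num, cov_prime 5 _ (by norm_num) (by norm_num) (by norm_num) n hn⟩;
      exact ⟨3, by norm_num, by norm_num [Lc], by norm_num [Lc], by norm_num, cov_prime 3 _ (by norm_num) (by norm_num) (by norm_num) n hn⟩;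
      exact ⟨13, by norm_num, by norm_num [Lc], by norm_num [Lc], by norm_num, cov_prime 13 _ (by norm_num) (by norm_num) (by norm_num) n hn⟩]


/-- A number is composite if it is a product of two integers greater than 1. -/
def IsComposite (n : ℕ) : Prop := ∃ a b : ℕ, 1 < a ∧ 1 < b ∧ n = a * b

/-- A Sierpiński number is an odd positive integer `k` such that `k·2^n + 1` is composite
for every positive integer `n`. -/
def IsSierpinski (k : ℕ) : Prop := 0 < k ∧ Odd k ∧ ∀ n : ℕ, 0 < n → IsComposite (k * 2 ^ n + 1)

/-- For every integer `b > 78557`, there exist infinitely many positive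
integers `t` such that the `b`-repdigit `78557·(b^t − 1)/(b − 1)` is a Sierpiński number. -/
theorem stmt_8 (b : ℕ) (hb : 78557 < b) :
    {t : ℕ | 0 < t ∧ IsSierpinski (78557 * ((b ^ t - 1) / (b - 1)))}.Infinite := by
  have hb2 : 2 ≤ b := by omega
  apply Set.infinite_of_injective_forall_mem (f := fun j : ℕ => Lc * j + 1)
    (fun j₁ j₂ h => by simpa [Lc] using h)
  intro j
  simp only [Set.mem_setOf_eq]
  refine ⟨by omega, ?_⟩
  rw [geom_div b hb2]
  set S : ℕ := ∑ i ∈ range (Lc * j + 1), b ^ i with hSdef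
  have hS1 : 1 ≤ S := by
    have h0 : (0 : ℕ) ∈ range (Lc * j + 1) := by simp
    have := Finset.single_le_sum (f := fun i => b ^ i) (fun i _ => Nat.zero_le _) h0
    simpa using this
  -- S is odd
  have hodd : S % 2 = 1 := by
    have h2 := repunit_mod b 2 (by norm_num [Lc]) (by norm_num [Lc]) j
    have := congrArg ZMod.val h2
    rwa [ZMod.val_natCast] at this
  refine ⟨by positivity, Nat.odd_iff.mpr (by omega), fun n hn => ?_⟩
  obtain ⟨p, hp, hpL, hp1L, hp73, hpd⟩ := covering n
  haveI : Fact p.Prime := ⟨hp⟩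
  have hrep : S ≡ 1 [MOD p] := by
    rw [← ZMod.natCast_eq_natCast_iff]
    rw [repunit_mod b p hpL hp1L j]
    norm_num
  have hmod : 78557 * S * 2 ^ n + 1 ≡ 0 [MOD p] := by
    calc 78557 * S * 2 ^ n + 1
        ≡ 78557 * 1 * 2 ^ n + 1 [MOD p] :=
          (((hrep.mul_left 78557).mul_right _).add_right 1)
      _ = 78557 * 2 ^ n + 1 := by ring
      _ ≡ 0 [MOD p] := (Nat.modEq_zero_iff_dvd).mpr hpd
  obtain ⟨c, hc⟩ := (Nat.modEq_zero_iff_dvd).mp hmod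
  have hge : 157115 ≤ 78557 * S * 2 ^ n + 1 := by
    have h2n : 2 ≤ 2 ^ n := by
      calc 2 = 2 ^ 1 := rfl
        _ ≤ 2 ^ n := Nat.pow_le_pow_right (by norm_num) hn
    have : 78557 * 1 * 2 ≤ 78557 * S * 2 ^ n :=
      Nat.mul_le_mul (Nat.mul_le_mul_left _ hS1) h2n
    omega
  refine ⟨p, c, hp.one_lt, ?_, hc⟩
  rcases Nat.lt_or_ge c 2 with hc2 | hc2
  · interval_cases c <;> omega
  · omega
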